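/- Let λ_* > 0 and let λ : [0,∞) → ℝ be differentiable with λ(t) > 0 for all t ≥ 0 and λ'(t) = 1/(2·λ(t)) − 1/(2·λ_*) for all t ≥ 0. Then for every t ≥ 0, λ(t) − λ_* = (λ(0) − λ_*)·exp(−t/(2·λ_*²) − (λ(t) − λ(0))/λ_*). -/

import Mathlib

/-- Explicit implicit-form solution of the eigenvalue ODE
`λ' = 1/(2λ) − 1/(2λ⋆)` of the vanilla Gaussian approximate gradient flow:
`λ(t) − λ⋆ = (λ(0) − λ⋆) exp(−t/(2λ⋆²) − (λ(t) − λ(0))/λ⋆)` for all `t ≥ 0`. -/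
theorem vanilla_gaussian_flow_eigenvalue_identity
    (lamstar : ℝ) (hlamstar : 0 < lamstar)
    (lam : ℝ → ℝ)
    (hpos : ∀ t : ℝ, 0 ≤ t → 0 < lam t)
    (hderiv : ∀ t : ℝ, 0 ≤ t →
      HasDerivAt lam (1 / (2 * lam t) - 1 / (2 * lamstar)) t) :
    ∀ t : ℝ, 0 ≤ t →
      lam t - lamstar = (lam 0 - lamstar) *
        Real.exp (-t / (2 * lamstar ^ 2) - (lam t - lam 0) / lamstar) := by
  intro t ht
  have hc : lamstar ≠ 0 := hlamstar.ne'
  set g : ℝ → ℝ := fun s => s / (2 * lamstar ^ 2) + (lam s - lam 0) / lamstar with hg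
  set F : ℝ → ℝ := fun s => (lam s - lamstar) * Real.exp (g s) with hFdef
  have hFd : ∀ s : ℝ, 0 ≤ s → HasDerivAt F 0 s := by
    intro s hs
    have hl := hderiv s hs
    have hgd : HasDerivAt g
        (1 / (2 * lamstar ^ 2) + (1 / (2 * lam s) - 1 / (2 * lamstar)) / lamstar) s := by
      have h1 : HasDerivAt (fun u : ℝ => u / (2 * lamstar ^ 2)) (1 / (2 * lamstar ^ 2)) s := by
        have := (hasDerivAt_id s).div_const (2 * lamstar ^ 2)
        rw [one_div]
        simpa using this
      have h2 : HasDerivAt (fun u => (lam u - lam 0) / lamstar)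
          ((1 / (2 * lam s) - 1 / (2 * lamstar)) / lamstar) s :=
        (hl.sub_const (lam 0)).div_const lamstar
      exact h1.add h2
    have he := hgd.exp
    have hmul := (hl.sub_const lamstar).mul he
    have hls : lam s ≠ 0 := (hpos s hs).ne'
    refine HasDerivAt.congr_deriv hmul ?_
    have hk : (1 / (2 * lam s) - 1 / (2 * lamstar)) + (lam s - lamstar) *
        (1 / (2 * lamstar ^ 2) + (1 / (2 * lam s) - 1 / (2 * lamstar)) / lamstar) = 0 := by
      field_simp
      ring
    linear_combination (Real.exp (g s)) * hk
  have hcont : ContinuousOn F (Set.Icc 0 t) := fun x hx =>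
    ((hFd x hx.1).continuousAt).continuousWithinAt
  have key : F t = F 0 := by
    rcases eq_or_lt_of_le ht with h | h
    · rw [← h]
    · exact constant_of_has_deriv_right_zero hcont
        (fun x hx => (hFd x hx.1).hasDerivWithinAt) t (Set.mem_Icc.2 ⟨ht, le_rfl⟩)
  have hF0 : F 0 = lam 0 - lamstar := by
    simp [hFdef, hg]
  have hstep : lam t - lamstar = F t * Real.exp (-(g t)) := by
    rw [hFdef]
    simp only
    rw [mul_assoc, ← Real.exp_add, add_neg_cancel, Real.exp_zero, mul_one]
  rw [hstep, key, hF0]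
  congr 1
  rw [hg]
  ring
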